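/- Let F be the unitary DFT on C^J with |J| = n, and let K, L ⊆ J with p = |K| ≤ |L|. Let σ_1 ≥ ... ≥ σ_p be the singular values of F*_{L,K} and τ_1 ≥ ... ≥ τ_p the singular values of F*_{L^c,K}, both in decreasing order. Then for each 1 ≤ j ≤ p, σ_j² = 1 − τ_{p−j+1}². -/

import Mathlib

open Matrix Polynomial in
lemma charpoly_conj_aux {m : Type*} [Fintype m] [DecidableEq m]
    (U V A : Matrix m m ℂ) (hUV : U * V = 1) (hVU : V * U = 1) :
    (U * A * V).charpoly = A.charpoly := by
  have key : charmatrix (U * A * V) =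
      (C : ℂ →+* ℂ[X]).mapMatrix U * charmatrix A * (C : ℂ →+* ℂ[X]).mapMatrix V := by
    simp only [charmatrix, mul_sub, sub_mul]
    congr 1
    · rw [mul_assoc, scalar_commute (X : ℂ[X]) (fun r => Commute.all _ _) _]
      rw [← mul_assoc, ← _root_.map_mul, hUV]
      simp
    · simp [← _root_.map_mul, Matrix.mul_assoc]
  have hVU' : (C : ℂ →+* ℂ[X]).mapMatrix V * (C : ℂ →+* ℂ[X]).mapMatrix U = 1 := by
    rw [← _root_.map_mul, hVU, _root_.map_one]
  rw [Matrix.charpoly, key, det_mul, det_mul, mul_comm, ← mul_assoc, ← det_mul, hVU']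
  simp [Matrix.charpoly]

open Matrix Polynomial in
lemma roots_charpoly_conj_diag {m : Type*} [Fintype m] [DecidableEq m]
    (U V : Matrix m m ℂ) (hUV : U * V = 1) (hVU : V * U = 1) (d : m → ℝ) :
    (U * diagonal (fun i => (d i : ℂ)) * V).charpoly.roots
      = Finset.univ.val.map (fun i => (d i : ℂ)) := by
  rw [charpoly_conj_aux U V _ hUV hVU]
  have hcp : (diagonal (fun i => (d i : ℂ))).charpoly
      = ((Finset.univ.val.map (fun i => (d i : ℂ))).map (fun a => X - C a)).prod := by
    rw [Matrix.charpoly, charmatrix]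
    rw [show ((scalar m) (X : ℂ[X]) : Matrix m m ℂ[X]) = diagonal (fun _ => X) from rfl]
    rw [show ((C : ℂ →+* ℂ[X]).mapMatrix (diagonal fun i => (d i : ℂ)))
        = diagonal (fun i => C (d i : ℂ)) from by
      simp [RingHom.mapMatrix_apply, diagonal_map]]
    rw [diagonal_sub, det_diagonal, Multiset.map_map, Finset.prod_eq_multiset_prod]
    rfl
  rw [hcp, roots_multiset_prod_X_sub_C]

open Matrix Polynomial in
lemma eig_multiset_eq_roots {m : Type*} [Fintype m] [DecidableEq m]
    {A : Matrix m m ℂ} (hA : A.IsHermitian) :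
    A.charpoly.roots = Finset.univ.val.map (fun i => (hA.eigenvalues i : ℂ)) := by
  have hU := (Matrix.mem_unitaryGroup_iff).mp (hA.eigenvectorUnitary).2
  have hU' := (Matrix.mem_unitaryGroup_iff').mp (hA.eigenvectorUnitary).2
  conv_lhs => rw [hA.spectral_theorem]
  exact roots_charpoly_conj_diag _ _ hU hU' _

open Matrix in
lemma eig_compl {m : Type*} [Fintype m] [DecidableEq m]
    {A B : Matrix m m ℂ} (hA : A.IsHermitian) (hB : B.IsHermitian)
    (hAB : A + B = 1) :
    Finset.univ.val.map hB.eigenvalues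
      = (Finset.univ.val.map hA.eigenvalues).map (fun x => 1 - x) := by
  have hU := (Matrix.mem_unitaryGroup_iff).mp (hA.eigenvectorUnitary).2
  have hU' := (Matrix.mem_unitaryGroup_iff').mp (hA.eigenvectorUnitary).2
  have hBeq : B = (hA.eigenvectorUnitary : Matrix m m ℂ)
      * diagonal (fun i => ((1 - hA.eigenvalues i : ℝ) : ℂ))
      * (star (hA.eigenvectorUnitary : Matrix m m ℂ)) := by
    have h1 : (1 : Matrix m m ℂ) = (hA.eigenvectorUnitary : Matrix m m ℂ)
        * 1 * (star (hA.eigenvectorUnitary : Matrix m m ℂ)) := by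
      rw [mul_one, hU]
    have hB1 : B = 1 - A := by rw [← hAB]; abel
    rw [hB1]
    conv_lhs => rw [hA.spectral_theorem, h1]
    rw [Unitary.conjStarAlgAut_apply]
    rw [← sub_mul, ← mul_sub]
    congr 1
    rw [show (1 : Matrix m m ℂ) = diagonal (fun _ => (1:ℂ)) from (diagonal_one).symm]
    rw [diagonal_sub]
    congr 1
    ext i
    simp [Function.comp]
  have h1 : B.charpoly.roots = Finset.univ.val.map (fun i => ((1 - hA.eigenvalues i : ℝ) : ℂ)) := by
    conv_lhs => rw [hBeq]
    exact roots_charpoly_conj_diag _ _ hU hU' _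
  have h2 := eig_multiset_eq_roots hB
  rw [h2] at h1
  have := Multiset.map_injective (f := (fun x : ℝ => (x:ℂ))) Complex.ofReal_injective
  have h3 : Finset.univ.val.map hB.eigenvalues
      = Finset.univ.val.map (fun i => 1 - hA.eigenvalues i) := by
    apply this
    rw [Multiset.map_map, Multiset.map_map]
    simpa [Function.comp_def] using h1
  rw [h3, Multiset.map_map]
  rfl

open Matrix in
lemma dft_row_orth (n : ℕ) (hn : 0 < n) (F : Matrix (Fin n) (Fin n) ℂ)
    (hF : F = fun (j k : Fin n) => Complex.exp (-(2 * Real.pi * Complex.I) *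
        ((j : ℕ) : ℂ) * ((k : ℕ) : ℂ) / (n : ℂ)) / (Real.sqrt n : ℂ))
    (k k' : Fin n) :
    ∑ l : Fin n, F k l * (starRingEnd ℂ) (F k' l) = if k = k' then 1 else 0 := by
  have hn0 : (n : ℂ) ≠ 0 := Nat.cast_ne_zero.mpr hn.ne'
  have hsqrt : (Real.sqrt n : ℂ) * (Real.sqrt n : ℂ) = (n : ℂ) := by
    rw [← Complex.ofReal_mul, Real.mul_self_sqrt (Nat.cast_nonneg n)]
    simp
  set c : ℂ := 2 * Real.pi * Complex.I with hc
  set ζ : ℂ := Complex.exp (c * (((k' : ℕ) : ℂ) - ((k : ℕ) : ℂ)) / n) with hζ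
  have hterm : ∀ l : Fin n, F k l * (starRingEnd ℂ) (F k' l) = ζ ^ (l : ℕ) / n := by
    intro l
    rw [hF]
    simp only
    rw [map_div₀, ← Complex.exp_conj]
    have hconj : (starRingEnd ℂ) (-(2 * ↑Real.pi * Complex.I) * ((k' : ℕ) : ℂ) * ((l : ℕ) : ℂ) / (n : ℂ))
        = (2 * ↑Real.pi * Complex.I) * ((k' : ℕ) : ℂ) * ((l : ℕ) : ℂ) / (n : ℂ) := by
      simp [map_div₀, Complex.conj_I, map_ofNat]
    rw [hconj]
    rw [div_mul_div_comm, ← Complex.exp_add]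
    have : (starRingEnd ℂ) ((Real.sqrt n : ℝ) : ℂ) = (Real.sqrt n : ℂ) := Complex.conj_ofReal _
    rw [this, hsqrt]
    congr 1
    rw [hζ, ← Complex.exp_nat_mul]
    congr 1
    field_simp
    ring
  rw [Finset.sum_congr rfl (fun l _ => hterm l)]
  rw [← Finset.sum_div]
  have hsum : ∑ l : Fin n, ζ ^ (l : ℕ) = ∑ i ∈ Finset.range n, ζ ^ i := by
    exact Fin.sum_univ_eq_sum_range _ n
  rw [hsum]
  by_cases hkk : k = k'
  · subst hkk
    have : ζ = 1 := by rw [hζ]; simp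
    rw [this]
    simp [hn0]
  · rw [if_neg hkk]
    have hζn : ζ ^ n = 1 := by
      rw [hζ, ← Complex.exp_nat_mul]
      have : (n : ℂ) * (c * (((k' : ℕ) : ℂ) - ((k : ℕ) : ℂ)) / n)
          = (((k' : ℤ) - (k : ℤ) : ℤ) : ℂ) * (2 * Real.pi * Complex.I) := by
        push_cast
        field_simp
        ring
      rw [this, Complex.exp_int_mul_two_pi_mul_I]
    have hζ1 : ζ ≠ 1 := by
      intro h
      rw [hζ, Complex.exp_eq_one_iff] at h
      obtain ⟨m, hm⟩ := h
      rw [hc] at hm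
      have hI : (2 * (Real.pi : ℂ) * Complex.I) ≠ 0 := by
        simp [Real.pi_ne_zero, Complex.I_ne_zero]
      have hmn : (((k' : ℕ) : ℂ) - ((k : ℕ) : ℂ)) = m * n := by
        have h2 := congrArg (· * (n : ℂ)) hm
        rw [div_mul_cancel₀ _ hn0] at h2
        apply mul_left_cancel₀ hI
        rw [h2]; ring
      have : ((k' : ℤ) - (k : ℤ) : ℂ) = ((m * n : ℤ) : ℂ) := by push_cast; push_cast at hmn; linear_combination hmn
      have hint : (k' : ℤ) - (k : ℤ) = m * n := by exact_mod_cast this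
      have hlt : |(k' : ℤ) - (k : ℤ)| < n := by
        have h1 : (k' : ℤ) < n := by exact_mod_cast k'.isLt
        have h2 : (k : ℤ) < n := by exact_mod_cast k.isLt
        have h3 : 0 ≤ (k' : ℤ) := Int.ofNat_nonneg _
        have h4 : 0 ≤ (k : ℤ) := Int.ofNat_nonneg _
        rw [abs_lt]; omega
      rw [hint] at hlt
      have hn' : (0 : ℤ) < n := by exact_mod_cast hn
      have hm0 : m = 0 := by
        rcases eq_or_ne m 0 with h | h
        · exact h
        · exfalso
          have h1 : 1 ≤ |m| := Int.one_le_abs h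
          have h2 : (n : ℤ) ≤ |m| * (n : ℤ) := le_mul_of_one_le_left hn'.le h1
          have h3 : (n : ℤ) ≤ |m * n| := by
            rw [abs_mul, abs_of_nonneg hn'.le]; exact h2
          exact absurd hlt (not_lt.mpr h3)
      rw [hm0] at hint
      simp only [zero_mul] at hint
      have : (k' : ℤ) = (k : ℤ) := by omega
      exact hkk (Fin.ext (by exact_mod_cast this.symm) )
    rw [geom_sum_eq hζ1, hζn]
    simp

open Matrix in
lemma gram_sum (n : ℕ) (K L : Finset (Fin n)) (F : Matrix (Fin n) (Fin n) ℂ)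
    (horth : ∀ k k' : Fin n,
      ∑ l : Fin n, F k l * (starRingEnd ℂ) (F k' l) = if k = k' then 1 else 0) :
    ((Fᴴ).submatrix (fun l : ↥L => (l : Fin n)) (fun k : ↥K => (k : Fin n)))ᴴ *
      ((Fᴴ).submatrix (fun l : ↥L => (l : Fin n)) (fun k : ↥K => (k : Fin n))) +
    ((Fᴴ).submatrix (fun l : ↥(Lᶜ) => (l : Fin n)) (fun k : ↥K => (k : Fin n)))ᴴ *
      ((Fᴴ).submatrix (fun l : ↥(Lᶜ) => (l : Fin n)) (fun k : ↥K => (k : Fin n))) = 1 := by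
  ext k k'
  simp only [Matrix.add_apply, Matrix.mul_apply, Matrix.conjTranspose_apply,
    Matrix.submatrix_apply, Matrix.one_apply]
  have hterm : ∀ l : Fin n,
      star (Fᴴ l (k : Fin n)) * Fᴴ l (k' : Fin n)
        = F (k : Fin n) l * (starRingEnd ℂ) (F (k' : Fin n) l) := by
    intro l
    simp only [Matrix.conjTranspose_apply]
    rw [star_star]
    rfl
  calc (∑ l : ↥L, star (Fᴴ (l : Fin n) (k : Fin n)) * Fᴴ (l : Fin n) (k' : Fin n))
        + ∑ l : ↥(Lᶜ), star (Fᴴ (l : Fin n) (k : Fin n)) * Fᴴ (l : Fin n) (k' : Fin n)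
      = (∑ l ∈ L, F (k : Fin n) l * (starRingEnd ℂ) (F (k' : Fin n) l))
        + ∑ l ∈ Lᶜ, F (k : Fin n) l * (starRingEnd ℂ) (F (k' : Fin n) l) := by
        rw [← Finset.sum_coe_sort L, ← Finset.sum_coe_sort (Lᶜ)]
        simp only [hterm]
    _ = ∑ l : Fin n, F (k : Fin n) l * (starRingEnd ℂ) (F (k' : Fin n) l) := by
        rw [Finset.sum_add_sum_compl]
    _ = if (k : Fin n) = (k' : Fin n) then 1 else 0 := horth _ _
    _ = if k = k' then (1:ℂ) else 0 := by
        congr 1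
        exact propext Subtype.ext_iff.symm

lemma antitone_eq_of_multiset_eq {p : ℕ} (f g : Fin p → ℝ)
    (hf : Antitone f) (hg : Antitone g)
    (h : Finset.univ.val.map f = Finset.univ.val.map g) : f = g := by
  apply List.ofFn_injective (n := p)
  have hperm : (List.ofFn f).Perm (List.ofFn g) := by
    rw [← Multiset.coe_eq_coe, ← Fin.univ_val_map, ← Fin.univ_val_map]
    exact h
  have hs1 : (List.ofFn f).Pairwise (· ≥ ·) :=
    List.pairwise_ofFn.mpr (fun i j hij => hf hij.le)
  have hs2 : (List.ofFn g).Pairwise (· ≥ ·) :=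
    List.pairwise_ofFn.mpr (fun i j hij => hg hij.le)
  exact List.Perm.eq_of_pairwise' hs1 hs2 hperm

open scoped BigOperators Matrix

/-- complementary relation between the singular values of `F*_{L,K}`
and `F*_{Lᶜ,K}` for the unitary DFT `F`. -/
theorem stmt1 (n : ℕ) (hn : 0 < n) (K L : Finset (Fin n)) (hKL : K.card ≤ L.card)
    (F : Matrix (Fin n) (Fin n) ℂ)
    (hF : F = fun (j k : Fin n) => Complex.exp (-(2 * Real.pi * Complex.I) *
        ((j : ℕ) : ℂ) * ((k : ℕ) : ℂ) / (n : ℂ)) / (Real.sqrt n : ℂ))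
    (σ τ : Fin K.card → ℝ)
    (hσmono : Antitone σ) (hτmono : Antitone τ)
    (hσ0 : ∀ j, 0 ≤ σ j) (hτ0 : ∀ j, 0 ≤ τ j)
    (hσ : (Finset.univ.val.map fun j => σ j ^ 2) =
      Finset.univ.val.map fun k : ↥K =>
        (Matrix.isHermitian_conjTranspose_mul_self
          ((Fᴴ).submatrix (fun l : ↥L => (l : Fin n)) (fun k : ↥K => (k : Fin n)))).eigenvalues k)
    (hτ : (Finset.univ.val.map fun j => τ j ^ 2) =
      Finset.univ.val.map fun k : ↥K =>
        (Matrix.isHermitian_conjTranspose_mul_self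
          ((Fᴴ).submatrix (fun l : ↥(Lᶜ) => (l : Fin n)) (fun k : ↥K => (k : Fin n)))).eigenvalues k)
    (j : Fin K.card) :
    σ j ^ 2 = 1 - τ j.rev ^ 2 := by
  have horth := dft_row_orth n hn F hF
  have hG := gram_sum n K L F horth
  have hEig := eig_compl
    (Matrix.isHermitian_conjTranspose_mul_self
      ((Fᴴ).submatrix (fun l : ↥L => (l : Fin n)) (fun k : ↥K => (k : Fin n))))
    (Matrix.isHermitian_conjTranspose_mul_self
      ((Fᴴ).submatrix (fun l : ↥(Lᶜ) => (l : Fin n)) (fun k : ↥K => (k : Fin n)))) hG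
  have hτ2 : (Finset.univ.val.map fun j => τ j ^ 2)
      = ((Finset.univ.val.map fun j => σ j ^ 2)).map (fun x => 1 - x) := by
    rw [hτ, hσ]
    exact hEig
  have hcomp : ((fun x : ℝ => 1 - x) ∘ (fun x : ℝ => 1 - x)) = id := by
    funext x; simp
  have hσ2 : (Finset.univ.val.map fun j => σ j ^ 2)
      = (Finset.univ.val.map fun j => τ j ^ 2).map (fun x => 1 - x) := by
    rw [hτ2, Multiset.map_map, hcomp, Multiset.map_id]
  have huniv : (Finset.univ.val : Multiset (Fin K.card))
      = Finset.univ.val.map Fin.rev := by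
    conv_lhs => rw [← Finset.map_univ_equiv (Fin.revPerm (n := K.card))]
    rfl
  have hσ3 : (Finset.univ.val.map fun j => σ j ^ 2)
      = Finset.univ.val.map (fun j => 1 - τ (Fin.rev j) ^ 2) := by
    rw [hσ2, Multiset.map_map]
    conv_lhs => rw [huniv]
    rw [Multiset.map_map]
    rfl
  have hfa : Antitone (fun j : Fin K.card => σ j ^ 2) := by
    intro i j hij
    exact pow_le_pow_left₀ (hσ0 j) (hσmono hij) 2
  have hga : Antitone (fun j : Fin K.card => 1 - τ (Fin.rev j) ^ 2) := by
    intro i j hij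
    simp only
    have h1 : Fin.rev j ≤ Fin.rev i := Fin.rev_le_rev.mpr hij
    have h2 : τ (Fin.rev i) ≤ τ (Fin.rev j) := hτmono h1
    have h3 : τ (Fin.rev i) ^ 2 ≤ τ (Fin.rev j) ^ 2 :=
      pow_le_pow_left₀ (hτ0 _) h2 2
    linarith
  have := antitone_eq_of_multiset_eq _ _ hfa hga hσ3
  exact congrFun this j
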